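/- Let P be the subgroup of G₃₅₁ consisting of the additive translations x ↦ x + b for b ∈ F₂₇ (the Sylow 3-subgroup of G₃₅₁, of order 27). For the action of G₃₅₁ on subsets of G₃₅₁ by left translation, the number of subsets S ⊆ G₃₅₁ whose stabilizer is exactly P equals 2¹³ − 2, and these subsets form exactly 630 orbits. -/

import Mathlib

open Pointwise

/-- `F₂₇`, a finite field with 27 elements. -/
abbrev F27 : Type := GaloisField 3 3

/-- `a` is a nonzero square in `F₂₇`. -/
def IsNonzeroSquare (a : F27) : Prop := a ≠ 0 ∧ ∃ c : F27, a = c ^ 2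

/-- The set of affine permutations `x ↦ a·x + b` with `a` a nonzero square. -/
def affineSet : Set (Equiv.Perm F27) :=
  { g | ∃ a b : F27, IsNonzeroSquare a ∧ ∀ x : F27, g x = a * x + b }



lemma mem_affine {G : Subgroup (Equiv.Perm F27)}
    (hG : (G : Set (Equiv.Perm F27)) = affineSet) (g : G) :
    (g : Equiv.Perm F27) ∈ affineSet := by
  have := g.2; rwa [← SetLike.mem_coe, hG] at this

lemma affine_spec {g : Equiv.Perm F27} (h : g ∈ affineSet) :
    IsNonzeroSquare (g 1 - g 0) ∧ ∀ x : F27, g x = (g 1 - g 0) * x + g 0 := by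
  obtain ⟨a, b, ha, hab⟩ := h
  have h1 : g 1 - g 0 = a := by rw [hab, hab]; ring
  have h0 : g 0 = b := by rw [hab]; ring
  rw [h1, h0]; exact ⟨ha, hab⟩

noncomputable def phi (G : Subgroup (Equiv.Perm F27))
    (hG : (G : Set (Equiv.Perm F27)) = affineSet) : G →* F27ˣ where
  toFun g := Units.mk0 ((g : Equiv.Perm F27) 1 - (g : Equiv.Perm F27) 0)
    (affine_spec (mem_affine hG g)).1.1
  map_one' := by
    ext
    simp [Equiv.Perm.one_apply]
  map_mul' g h := by
    ext
    have hg := (affine_spec (mem_affine hG g)).2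
    simp only [Units.val_mul, Units.val_mk0, Subgroup.coe_mul, Equiv.Perm.mul_apply]
    rw [hg ((h : Equiv.Perm F27) 1), hg ((h : Equiv.Perm F27) 0)]; ring

lemma phi_surj_onto (G : Subgroup (Equiv.Perm F27))
    (hG : (G : Set (Equiv.Perm F27)) = affineSet) :
    (phi G hG).range = (powMonoidHom 2 : F27ˣ →* F27ˣ).range := by
  ext u
  constructor
  · rintro ⟨g, rfl⟩
    obtain ⟨⟨hne, c, hc⟩, hx⟩ := affine_spec (mem_affine hG g)
    have hcne : c ≠ 0 := by rintro rfl; simp at hc; exact hne hc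
    refine ⟨Units.mk0 c hcne, ?_⟩
    ext
    simp only [powMonoidHom_apply, Units.val_pow_eq_pow_val, Units.val_mk0, phi,
      MonoidHom.coe_mk, OneHom.coe_mk]
    rw [hc]
  · rintro ⟨v, rfl⟩
    have hmem : (Equiv.mulLeft₀ ((v:F27ˣ)^2 : F27ˣ) (by simp : ((v^2 : F27ˣ) : F27) ≠ 0) : Equiv.Perm F27) ∈ G := by
      rw [← SetLike.mem_coe, hG]
      exact ⟨((v^2 : F27ˣ) : F27), 0, ⟨by simp, (v:F27), by norm_cast⟩, fun x => by simp [Equiv.mulLeft₀]⟩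
    refine ⟨⟨_, hmem⟩, ?_⟩
    ext
    simp [phi, powMonoidHom, Equiv.mulLeft₀]


lemma F27_card : Nat.card F27 = 27 := by
  have := GaloisField.card 3 3 (by norm_num)
  norm_num at this ⊢; exact this

lemma F27_units_card : Nat.card F27ˣ = 26 := by
  rw [Nat.card_units, F27_card]

lemma neg_one_ne_one : (-1 : F27) ≠ 1 := by
  intro h
  have h2 : ((2 : ℕ) : F27) = 0 := by push_cast; linear_combination -h
  rw [CharP.cast_eq_zero_iff F27 3] at h2
  norm_num at h2

lemma sq_ker_card : Nat.card (powMonoidHom 2 : F27ˣ →* F27ˣ).ker = 2 := by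
  have hker : ((powMonoidHom 2 : F27ˣ →* F27ˣ).ker : Set F27ˣ) = {1, -1} := by
    ext u
    simp only [SetLike.mem_coe, MonoidHom.mem_ker, powMonoidHom_apply, Set.mem_insert_iff,
      Set.mem_singleton_iff]
    constructor
    · intro h
      have : ((u : F27) - 1) * ((u : F27) + 1) = 0 := by
        have := congrArg (Units.val) h
        push_cast at this
        linear_combination this
      rcases mul_eq_zero.1 this with h' | h'
      · left; ext; push_cast; linear_combination h'
      · right; ext; push_cast; linear_combination h'
    · rintro (rfl | rfl) <;> ext <;> push_cast <;> ring
  rw [← SetLike.coe_sort_coe, Nat.card_coe_set_eq, hker, Set.ncard_pair]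
  intro h
  exact neg_one_ne_one (congrArg Units.val h.symm)

lemma sq_range_card : Nat.card (powMonoidHom 2 : F27ˣ →* F27ˣ).range = 13 := by
  have h1 := Subgroup.card_eq_card_quotient_mul_card_subgroup
    (powMonoidHom 2 : F27ˣ →* F27ˣ).ker
  have h2 : Nat.card (F27ˣ ⧸ (powMonoidHom 2 : F27ˣ →* F27ˣ).ker)
      = Nat.card (powMonoidHom 2 : F27ˣ →* F27ˣ).range :=
    Nat.card_congr (QuotientGroup.quotientKerEquivRange _).toEquiv
  rw [F27_units_card, sq_ker_card, h2] at h1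
  omega


variable {H : Type*} [Group H] (N : Subgroup H) [N.Normal]

lemma smul_preimage (g : H) (T : Set (H ⧸ N)) :
    g • ((QuotientGroup.mk' N) ⁻¹' T) = (QuotientGroup.mk' N) ⁻¹' ((QuotientGroup.mk' N g) • T) := by
  ext k
  rw [Set.mem_smul_set_iff_inv_smul_mem, Set.mem_preimage, Set.mem_preimage,
    Set.mem_smul_set_iff_inv_smul_mem]
  simp [smul_eq_mul]

lemma stab_preimage (T : Set (H ⧸ N)) :
    MulAction.stabilizer H ((QuotientGroup.mk' N) ⁻¹' T)
      = (MulAction.stabilizer (H ⧸ N) T).comap (QuotientGroup.mk' N) := by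
  ext g
  rw [MulAction.mem_stabilizer_iff, Subgroup.mem_comap, MulAction.mem_stabilizer_iff,
    smul_preimage]
  exact ⟨fun h => (QuotientGroup.mk'_surjective N).preimage_injective h, fun h => by rw [h]⟩

lemma eq_preimage_of_le_stab (S : Set H) (hS : N ≤ MulAction.stabilizer H S) :
    S = (QuotientGroup.mk' N) ⁻¹' ((QuotientGroup.mk' N) '' S) := by
  ext k
  simp only [Set.mem_preimage, Set.mem_image]
  constructor
  · exact fun h => ⟨k, h, rfl⟩
  · rintro ⟨s, hs, hsk⟩
    rw [QuotientGroup.mk'_eq_mk'] at hsk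
    obtain ⟨z, hz, rfl⟩ := hsk
    -- k = s * z with z ∈ N; since N normal, s * z = z' * s with z' ∈ N
    have hz' : s * z * s⁻¹ ∈ N := Subgroup.Normal.conj_mem ‹N.Normal› z hz s
    have hst := hS hz'
    rw [MulAction.mem_stabilizer_iff] at hst
    have hmem2 : (s * z * s⁻¹) • s ∈ (s * z * s⁻¹) • S := Set.smul_mem_smul_set hs
    rw [hst] at hmem2
    have heq : (s * z * s⁻¹) • s = s * z := by rw [smul_eq_mul]; group
    rwa [heq] at hmem2

lemma stab_bot_iff {Q : Type*} [Group Q] (hQ : Nat.card Q = 13) (T : Set Q) :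
    MulAction.stabilizer Q T = ⊥ ↔ T ≠ ∅ ∧ T ≠ Set.univ := by
  have hfin : Finite Q := Nat.finite_of_card_ne_zero (by omega)
  have hnt : Nontrivial Q := by
    have h1 : 1 < Nat.card Q := by omega
    exact Finite.one_lt_card_iff_nontrivial.1 h1
  have htop : MulAction.stabilizer Q T = ⊤ ↔ (T = ∅ ∨ T = Set.univ) := by
    constructor
    · intro h
      by_cases he : T = ∅
      · exact Or.inl he
      · right
        obtain ⟨t, ht⟩ := Set.nonempty_iff_ne_empty.2 he
        ext r
        simp only [Set.mem_univ, iff_true]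
        have hmem : (r * t⁻¹) ∈ MulAction.stabilizer Q T := h ▸ Subgroup.mem_top _
        rw [MulAction.mem_stabilizer_iff] at hmem
        have : (r * t⁻¹) • t ∈ (r * t⁻¹) • T := Set.smul_mem_smul_set ht
        rw [hmem] at this
        simpa [smul_eq_mul] using this
    · rintro (rfl | rfl)
      · exact Subgroup.eq_top_iff' _ |>.2 fun g => by
          rw [MulAction.mem_stabilizer_iff]; simp
      · exact Subgroup.eq_top_iff' _ |>.2 fun g => by
          rw [MulAction.mem_stabilizer_iff]; simp
  have hdvd : Nat.card (MulAction.stabilizer Q T) ∣ 13 :=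
    hQ ▸ Subgroup.card_subgroup_dvd_card _
  have h13 : Nat.Prime 13 := by norm_num
  constructor
  · intro h
    rw [h] at htop
    have hbt : (⊥ : Subgroup Q) ≠ ⊤ := by
      intro hb
      have h1 : Nat.card (⊥ : Subgroup Q) = 1 := Subgroup.card_bot
      have h2 : Nat.card (⊤ : Subgroup Q) = 13 := by rw [Subgroup.card_top, hQ]
      rw [hb, h2] at h1
      omega
    constructor <;> intro hT <;> exact hbt (htop.2 (by simp [hT]))
  · rintro ⟨he, hu⟩
    rcases (Nat.Prime.eq_one_or_self_of_dvd h13 _ hdvd) with h1 | h1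
    · exact Subgroup.eq_bot_of_card_eq _ h1
    · exfalso
      have : MulAction.stabilizer Q T = ⊤ := Subgroup.eq_top_of_card_eq _ (by rw [h1, hQ])
      rcases htop.1 this with h' | h' <;> [exact he h'; exact hu h']


lemma count_proper {Q : Type*} (hQ : Nat.card Q = 13) :
    {T : Set Q | T ≠ ∅ ∧ T ≠ Set.univ}.ncard = 2 ^ 13 - 2 := by
  have hfin : Finite Q := Nat.finite_of_card_ne_zero (by omega)
  have hne : Nonempty Q := Nat.card_pos_iff.1 (by omega) |>.1
  haveI : Fintype Q := Fintype.ofFinite Q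
  have hset : {T : Set Q | T ≠ ∅ ∧ T ≠ Set.univ} = Set.univ \ ({∅, Set.univ} : Set (Set Q)) := by
    ext T
    simp only [Set.mem_setOf_eq, Set.mem_diff, Set.mem_univ, true_and, Set.mem_insert_iff,
      Set.mem_singleton_iff]
    tauto
  rw [hset, Set.ncard_diff (s := ({∅, Set.univ} : Set (Set Q))) (t := Set.univ) (by simp) (Set.toFinite _)]
  have h1 : (Set.univ : Set (Set Q)).ncard = 2 ^ 13 := by
    rw [Set.ncard_univ, Nat.card_eq_fintype_card, Fintype.card_set, ← Nat.card_eq_fintype_card, hQ]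
  have h2 : ({∅, Set.univ} : Set (Set Q)).ncard = 2 :=
    Set.ncard_pair (Set.empty_ne_univ)
  rw [h1, h2]

/-- Let `P ≤ G₃₅₁` be the subgroup of additive translations `x ↦ x + b` (of order 27).
For the action of `G₃₅₁` on its subsets by left translation, the number of subsets whose
stabilizer is exactly `P` equals `2¹³ − 2`, and these subsets form exactly 630 orbits. -/
theorem statement16 (G : Subgroup (Equiv.Perm F27))
    (hG : (G : Set (Equiv.Perm F27)) = affineSet)
    (P : Subgroup G)
    (hP : ∀ g : G, g ∈ P ↔ ∃ b : F27, ∀ x : F27, (g : Equiv.Perm F27) x = x + b) :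
    { S : Set G | MulAction.stabilizer G S = P }.ncard = 2 ^ 13 - 2 ∧
    { q : Quotient (MulAction.orbitRel G (Set G)) |
        ∃ S : Set G, Quotient.mk (MulAction.orbitRel G (Set G)) S = q ∧
          MulAction.stabilizer G S = P }.ncard = 630 := by
  classical
  have hPker : P = (phi G hG).ker := by
    ext g
    rw [hP, MonoidHom.mem_ker]
    constructor
    · rintro ⟨b, hb⟩
      ext
      simp only [phi, MonoidHom.coe_mk, OneHom.coe_mk, Units.val_mk0, Units.val_one]
      rw [hb, hb]; ring
    · intro h
      have h1 : (g : Equiv.Perm F27) 1 - (g : Equiv.Perm F27) 0 = 1 := by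
        have := congrArg Units.val h
        simpa [phi] using this
      refine ⟨(g : Equiv.Perm F27) 0, fun x => ?_⟩
      rw [(affine_spec (mem_affine hG g)).2 x, h1, one_mul]
  haveI hPnormal : P.Normal := hPker ▸ (phi G hG).normal_ker
  have hQcard : Nat.card (G ⧸ P) = 13 := by
    rw [hPker]
    rw [Nat.card_congr (QuotientGroup.quotientKerEquivRange (phi G hG)).toEquiv,
      phi_surj_onto G hG, sq_range_card]
  haveI : Finite F27 := Nat.finite_of_card_ne_zero (by rw [F27_card]; norm_num)
  haveI : Finite (Equiv.Perm F27) := inferInstance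
  haveI : Finite G := inferInstance
  have hkerπ : (QuotientGroup.mk' P).ker = P := QuotientGroup.ker_mk' P
  set A := { S : Set G | MulAction.stabilizer G S = P } with hA
  have himage : A = (fun T : Set (G ⧸ P) => (QuotientGroup.mk' P) ⁻¹' T) ''
      {T : Set (G ⧸ P) | T ≠ ∅ ∧ T ≠ Set.univ} := by
    ext S
    simp only [Set.mem_image, Set.mem_setOf_eq, hA]
    constructor
    · intro hS
      refine ⟨(QuotientGroup.mk' P) '' S, ?_,
        (eq_preimage_of_le_stab P S (le_of_eq hS.symm)).symm⟩
      rw [← stab_bot_iff hQcard]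
      apply Subgroup.comap_injective (QuotientGroup.mk'_surjective P)
      rw [← stab_preimage, ← eq_preimage_of_le_stab P S (le_of_eq hS.symm), hS,
        MonoidHom.comap_bot, hkerπ]
    · rintro ⟨T, hT, rfl⟩
      rw [stab_preimage, (stab_bot_iff hQcard T).2 hT, MonoidHom.comap_bot, hkerπ]
  have hcardA : A.ncard = 2 ^ 13 - 2 := by
    rw [himage, Set.ncard_image_of_injective _
      ((QuotientGroup.mk'_surjective P).preimage_injective), count_proper hQcard]
  refine ⟨hcardA, ?_⟩
  -- second part
  set f := Quotient.mk (MulAction.orbitRel G (Set G)) with hf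
  set B := { q : Quotient (MulAction.orbitRel G (Set G)) |
      ∃ S : Set G, f S = q ∧ MulAction.stabilizer G S = P } with hB
  have hconj : ∀ (g : G) (S : Set G), MulAction.stabilizer G S = P →
      MulAction.stabilizer G (g • S) = P := by
    intro g S hS
    rw [MulAction.stabilizer_smul_eq_stabilizer_map_conj, hS]
    ext x
    rw [Subgroup.mem_map_equiv]
    constructor
    · intro h
      have := hPnormal.conj_mem _ h g
      simpa [mul_assoc] using this
    · intro h
      have := hPnormal.conj_mem _ h g⁻¹
      simpa [mul_assoc] using this
  have hpre : A = f ⁻¹' B := by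
    ext S
    simp only [Set.mem_preimage, hB, Set.mem_setOf_eq, hA]
    constructor
    · intro h; exact ⟨S, rfl, h⟩
    · rintro ⟨S', hq, hS'⟩
      have horb : S' ∈ MulAction.orbit G S := by
        rw [← MulAction.orbitRel_apply]
        exact Quotient.eq.1 hq
      obtain ⟨g, hg⟩ := horb
      have := hconj g⁻¹ S' hS'
      rwa [← hg, inv_smul_smul] at this
  haveI : Fintype (Set G) := Fintype.ofFinite _
  haveI : Fintype (Quotient (MulAction.orbitRel G (Set G))) := Fintype.ofFinite _
  have hfiber : ∀ q ∈ B, Nat.card {S : Set G // f S = q} = 13 := by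
    rintro q ⟨S₀, rfl, hS₀⟩
    have e1 : {S : Set G // f S = f S₀} ≃ MulAction.orbit G S₀ :=
      Equiv.subtypeEquivRight fun S => by
        rw [hf, Quotient.eq, MulAction.orbitRel_apply]
    rw [Nat.card_congr e1,
      Nat.card_congr (MulAction.orbitEquivQuotientStabilizer G S₀), hS₀, hQcard]
  -- counting via fibers
  have hsum : A.toFinset.card = ∑ q ∈ B.toFinset, 13 := by
    rw [Finset.card_eq_sum_card_fiberwise
      (f := f) (t := B.toFinset) (fun S hS => by
        rw [Finset.mem_coe, Set.mem_toFinset] at hS ⊢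
        rw [hpre] at hS
        exact hS)]
    refine Finset.sum_congr rfl fun q hq => ?_
    rw [Set.mem_toFinset] at hq
    have : (A.toFinset.filter (fun S => f S = q)) = Finset.univ.filter (fun S => f S = q) := by
      ext S
      simp only [Finset.mem_filter, Set.mem_toFinset, Finset.mem_univ, true_and]
      constructor
      · exact fun h => h.2
      · intro h
        refine ⟨?_, h⟩
        rw [hpre, Set.mem_preimage, h]
        exact hq
    rw [this, ← Fintype.card_subtype, ← Nat.card_eq_fintype_card, hfiber q hq]
  have hAcard' : A.ncard = 13 * B.ncard := by
    rw [Set.ncard_eq_toFinset_card' A, Set.ncard_eq_toFinset_card' B, hsum,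
      Finset.sum_const, smul_eq_mul, mul_comm]
  rw [hcardA] at hAcard'
  omega
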